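/- Let F_n : ℝ^d → ℝ, for n in a finite set 𝒩, be convex and differentiable with ‖∇F_n(x)‖ ≤ μ for all x, let p_n ∈ [0,1] satisfy Σ_{n∈𝒩} p_n = 1, and set F = Σ_{n∈𝒩} p_n F_n. Let φ : ℝ^d → ℝ be differentiable and 1-strongly convex, with Bregman divergence B_φ(y; x) = φ(y) − φ(x) − ⟨∇φ(x), y − x⟩, and assume B_φ(u; Σ_i w_i z_i) ≤ Σ_i w_i B_φ(u; z_i) for any points z_i and convex weights w_i. Fix x^{(t)} ∈ ℝ^d and η > 0; for each n let x_n^{(t+1)} be a global minimizer over ℝ^d of x ↦ ⟨∇F_n(x^{(t)}), x⟩ + (1/η)·B_φ(x; x^{(t)}), and set x^{(t+1)} = Σ_{n∈𝒩} p_n x_n^{(t+1)}. Then for every u ∈ ℝ^d: F(x^{(t)}) − F(u) ≤ (1/η)·(B_φ(u; x^{(t)}) − B_φ(u; x^{(t+1)})) + (η·μ²)/2. -/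

import Mathlib

open Finset RealInnerProductSpace

section FedOMDAux
open InnerProductSpace

variable {E : Type*} [NormedAddCommGroup E] [InnerProductSpace ℝ E] [CompleteSpace E]

lemma convex_first_order {f : E → ℝ} {g x : E} (hc : ConvexOn ℝ Set.univ f)
    (hg : HasGradientAt f g x) (u : E) : f x + ⟪g, u - x⟫ ≤ f u := by
  have hline : HasDerivAt (fun t : ℝ => t • (u - x) + x) (u - x) 0 := by
    simpa using ((hasDerivAt_id (0 : ℝ)).smul_const (u - x)).add_const x
  have h0 : (0 : ℝ) • (u - x) + x = x := by simp
  have hd : HasDerivAt (fun t : ℝ => f (t • (u - x) + x)) ⟪g, u - x⟫ 0 := by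
    have := (h0.symm ▸ hg.hasFDerivAt).comp_hasDerivAt 0 hline
    simpa [Function.comp_def, toDual_apply_apply] using this
  have hconv' : ConvexOn ℝ Set.univ (fun t : ℝ => f (t • (u - x) + x)) := by
    have := hc.comp_affineMap (AffineMap.lineMap x u)
    simpa [AffineMap.lineMap_apply, Function.comp_def] using this
  have hslope := hconv'.le_slope_of_hasDerivAt (Set.mem_univ 0) (Set.mem_univ 1) one_pos hd
  simp [slope_def_field] at hslope
  linarith

lemma amgm' {a b η : ℝ} (hη : 0 < η) : a * b ≤ η * a ^ 2 / 2 + b ^ 2 / (2 * η) := by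
  rw [← sub_nonneg]
  have h : η * a ^ 2 / 2 + b ^ 2 / (2 * η) - a * b = (η * a - b) ^ 2 / (2 * η) := by
    field_simp; ring
  rw [h]; positivity

lemma psi_hasGradient (g a x₀ : E) (c C : ℝ) {φ : E → ℝ} {Gx : E} {x : E}
    (hφ : HasGradientAt φ Gx x) :
    HasGradientAt (fun y => ⟪g, y⟫ + c * (φ y - C - ⟪a, y - x₀⟫)) (g + c • Gx - c • a) x := by
  rw [hasGradientAt_iff_hasFDerivAt]
  have h1 : HasFDerivAt (fun y : E => ⟪g, y⟫) (toDual ℝ E g) x := by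
    have heq : (fun y : E => ⟪g, y⟫) = ⇑(toDual ℝ E g) := by ext y; simp
    rw [heq]; exact ContinuousLinearMap.hasFDerivAt _
  have h3 : HasFDerivAt (fun y : E => ⟪a, y - x₀⟫) (toDual ℝ E a) x := by
    have heq : (fun y : E => ⟪a, y - x₀⟫) = fun y => (toDual ℝ E a) y - ⟪a, x₀⟫ := by
      ext y; simp [inner_sub_right]
    rw [heq]; exact (ContinuousLinearMap.hasFDerivAt _).sub_const _
  have hφa : HasFDerivAt (fun y => φ y - C - ⟪a, y - x₀⟫)
      (toDual ℝ E Gx - toDual ℝ E a) x := (hφ.hasFDerivAt.sub_const C).sub h3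
  have hsum := h1.add (hφa.const_mul c)
  refine hsum.congr_fderiv ?_
  simp [map_add, map_sub, map_smul, smul_sub, add_sub_assoc]
end FedOMDAux


/-- **Per-round FedOMD inequality.**
One FedOMD step (local mirror-descent updates with learning rate `η > 0` against the gradients
of convex differentiable losses `F_n` with `μ`-bounded gradients, followed by weighted
aggregation), with a differentiable 1-strongly convex mirror map `φ` whose Bregman divergence
satisfies the averaged convexity assumption, satisfies for every comparator `u`:
`F(x^{(t)}) − F(u) ≤ (1/η)·(B_φ(u; x^{(t)}) − B_φ(u; x^{(t+1)})) + (η·μ²)/2`,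
where `F = Σ_{n∈𝒩} p_n F_n`. -/
theorem fedomd_one_step
    {d : ℕ} {ι : Type*} (N : Finset ι) (μ η : ℝ) (hη : 0 < η)
    (F : ι → EuclideanSpace ℝ (Fin d) → ℝ)
    (G : ι → EuclideanSpace ℝ (Fin d) → EuclideanSpace ℝ (Fin d))
    (p : ι → ℝ)
    (hconv : ∀ n ∈ N, ConvexOn ℝ Set.univ (F n))
    (hgrad : ∀ n ∈ N, ∀ y, HasGradientAt (F n) (G n y) y)
    (hgradbd : ∀ n ∈ N, ∀ y, ‖G n y‖ ≤ μ)
    (hp0 : ∀ n ∈ N, 0 ≤ p n)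
    (hp1 : ∀ n ∈ N, p n ≤ 1)
    (hpsum : ∑ n ∈ N, p n = 1)
    (φ : EuclideanSpace ℝ (Fin d) → ℝ)
    (Gφ : EuclideanSpace ℝ (Fin d) → EuclideanSpace ℝ (Fin d))
    (hφgrad : ∀ y, HasGradientAt φ (Gφ y) y)
    (hφsc : ∀ y z : EuclideanSpace ℝ (Fin d),
      φ z + ⟪Gφ z, y - z⟫ + (1 / 2) * ‖y - z‖ ^ 2 ≤ φ y)
    (B : EuclideanSpace ℝ (Fin d) → EuclideanSpace ℝ (Fin d) → ℝ)
    (hB : ∀ y z : EuclideanSpace ℝ (Fin d), B y z = φ y - φ z - ⟪Gφ z, y - z⟫)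
    (hBjensen : ∀ (j : ℕ) (z : Fin j → EuclideanSpace ℝ (Fin d)) (w : Fin j → ℝ),
      (∀ i, 0 ≤ w i) → (∀ i, w i ≤ 1) → ∑ i, w i = 1 →
      ∀ u, B u (∑ i, w i • z i) ≤ ∑ i, w i * B u (z i))
    (xt xt1 : EuclideanSpace ℝ (Fin d))
    (xloc : ι → EuclideanSpace ℝ (Fin d))
    (hlocmin : ∀ n ∈ N, ∀ y,
      ⟪G n xt, xloc n⟫ + (1 / η) * B (xloc n) xt ≤ ⟪G n xt, y⟫ + (1 / η) * B y xt)
    (hagg : xt1 = ∑ n ∈ N, p n • xloc n)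
    (u : EuclideanSpace ℝ (Fin d)) :
    (∑ n ∈ N, p n * F n xt) - (∑ n ∈ N, p n * F n u) ≤
      (1 / η) * (B u xt - B u xt1) + η * μ ^ 2 / 2 := by
  have hBlow : ∀ y z, (1 / 2) * ‖y - z‖ ^ 2 ≤ B y z := by
    intro y z; rw [hB]; have := hφsc y z; linarith
  -- Per-node inequality
  have key : ∀ n ∈ N, F n xt - F n u ≤ (1 / η) * (B u xt - B u (xloc n)) + η * μ ^ 2 / 2 := by
    intro n hn
    -- gradient of the local objective
    have hψ : HasGradientAt (fun y => ⟪G n xt, y⟫ + (1 / η) * B y xt)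
        (G n xt + (1 / η) • Gφ (xloc n) - (1 / η) • Gφ xt) (xloc n) := by
      have h := psi_hasGradient (G n xt) (Gφ xt) xt (1 / η) (φ xt) (hφgrad (xloc n))
      simp only [hB]; exact h
    have hmin : IsLocalMin (fun y => ⟪G n xt, y⟫ + (1 / η) * B y xt) (xloc n) :=
      Filter.Eventually.of_forall (hlocmin n hn)
    have hzero := hmin.hasFDerivAt_eq_zero hψ.hasFDerivAt
    have hvec : G n xt + (1 / η) • Gφ (xloc n) - (1 / η) • Gφ xt = 0 := by
      have := congrArg (InnerProductSpace.toDual ℝ (EuclideanSpace ℝ (Fin d))).symm hzero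
      simpa using this
    have hGrel : Gφ xt - Gφ (xloc n) = η • G n xt := by
      have h := congrArg (η • ·) hvec
      simp only [smul_add, smul_sub, smul_smul, smul_zero] at h
      rw [mul_one_div, div_self hη.ne', one_smul] at h
      have := (eq_sub_iff_add_eq.mpr (sub_eq_zero.mp h)).symm
      simpa using this
    -- three point identity
    have h3 : ⟪G n xt, xloc n - u⟫ = (1 / η) * (B u xt - B u (xloc n) - B (xloc n) xt) := by
      have hg : G n xt = (1 / η) • (Gφ xt - Gφ (xloc n)) := by
        rw [hGrel, smul_smul, one_div, inv_mul_cancel₀ hη.ne', one_smul]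
      rw [hg, real_inner_smul_left, hB, hB, hB]
      simp only [inner_sub_left, inner_sub_right]
      ring
    -- Cauchy-Schwarz + AM-GM bound
    have h4 : ⟪G n xt, xt - xloc n⟫ ≤ η * μ ^ 2 / 2 + (1 / η) * B (xloc n) xt := by
      have hcs := real_inner_le_norm (G n xt) (xt - xloc n)
      have ham := amgm' (a := ‖G n xt‖) (b := ‖xt - xloc n‖) hη
      have hgb : ‖G n xt‖ ≤ μ := hgradbd n hn xt
      have hg0 : (0 : ℝ) ≤ ‖G n xt‖ := norm_nonneg _
      have hsq : ‖G n xt‖ ^ 2 ≤ μ ^ 2 := pow_le_pow_left₀ hg0 hgb 2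
      have hrev : ‖xt - xloc n‖ = ‖xloc n - xt‖ := norm_sub_rev _ _
      have hBl := hBlow (xloc n) xt
      have hmul : (1 / η) * ((1 / 2) * ‖xloc n - xt‖ ^ 2) ≤ (1 / η) * B (xloc n) xt :=
        mul_le_mul_of_nonneg_left hBl (by positivity)
      have h2η : ‖xt - xloc n‖ ^ 2 / (2 * η) = (1 / η) * ((1 / 2) * ‖xloc n - xt‖ ^ 2) := by
        rw [hrev]; ring
      have hημ : η * ‖G n xt‖ ^ 2 / 2 ≤ η * μ ^ 2 / 2 := by
        have := mul_le_mul_of_nonneg_left hsq hη.le; linarith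
      calc ⟪G n xt, xt - xloc n⟫ ≤ ‖G n xt‖ * ‖xt - xloc n‖ := hcs
        _ ≤ η * ‖G n xt‖ ^ 2 / 2 + ‖xt - xloc n‖ ^ 2 / (2 * η) := ham
        _ ≤ η * μ ^ 2 / 2 + (1 / η) * B (xloc n) xt := by rw [h2η]; linarith
    -- convexity first-order bound
    have hfo := convex_first_order (hconv n hn) (hgrad n hn xt) u
    have hsplit : ⟪G n xt, xt - u⟫ = ⟪G n xt, xt - xloc n⟫ + ⟪G n xt, xloc n - u⟫ := by
      rw [← inner_add_right]; congr 1; abel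
    have hneg : ⟪G n xt, u - xt⟫ = -⟪G n xt, xt - u⟫ := by
      rw [← inner_neg_right, neg_sub]
    have hBp : 0 ≤ B (xloc n) xt := le_trans (by positivity) (hBlow (xloc n) xt)
    have h1η : (0:ℝ) < 1 / η := by positivity
    have hdist : (1 / η) * (B u xt - B u (xloc n) - B (xloc n) xt)
        = (1 / η) * (B u xt - B u (xloc n)) - (1 / η) * B (xloc n) xt := by ring
    linarith [mul_le_mul_of_nonneg_left hBp h1η.le]
  -- Jensen for the aggregate
  have hsumgen : ∀ {M : Type} [AddCommMonoid M] (f : ι → M),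
      ∑ i : Fin N.card, f (N.equivFin.symm i) = ∑ n ∈ N, f n := by
    intro M _ f
    rw [← Finset.sum_coe_sort N f]
    exact Fintype.sum_equiv N.equivFin.symm _ _ (fun i => rfl)
  have hjen : B u xt1 ≤ ∑ n ∈ N, p n * B u (xloc n) := by
    have h := hBjensen N.card (fun i => xloc (N.equivFin.symm i)) (fun i => p (N.equivFin.symm i))
      (fun i => hp0 _ (N.equivFin.symm i).2) (fun i => hp1 _ (N.equivFin.symm i).2)
      (by rw [hsumgen (fun n => p n)]; exact hpsum) u
    rw [hsumgen (fun n => p n • xloc n), hsumgen (fun n => p n * B u (xloc n))] at h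
    rw [hagg]; exact h
  -- Sum up
  have hstep : (∑ n ∈ N, p n * F n xt) - (∑ n ∈ N, p n * F n u)
      = ∑ n ∈ N, p n * (F n xt - F n u) := by
    rw [← Finset.sum_sub_distrib]; simp [mul_sub]
  rw [hstep]
  have hsum2 : ∑ n ∈ N, p n * ((1 / η) * (B u xt - B u (xloc n)) + η * μ ^ 2 / 2)
      = (1 / η) * (B u xt - ∑ n ∈ N, p n * B u (xloc n)) + η * μ ^ 2 / 2 := by
    rw [Finset.sum_congr rfl (fun n _ => by ring :
      ∀ n ∈ N, p n * ((1 / η) * (B u xt - B u (xloc n)) + η * μ ^ 2 / 2)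
        = p n * ((1 / η) * B u xt + η * μ ^ 2 / 2) - (1 / η) * (p n * B u (xloc n)))]
    rw [Finset.sum_sub_distrib, ← Finset.sum_mul, hpsum, ← Finset.mul_sum]
    ring
  calc ∑ n ∈ N, p n * (F n xt - F n u)
      ≤ ∑ n ∈ N, p n * ((1 / η) * (B u xt - B u (xloc n)) + η * μ ^ 2 / 2) :=
        Finset.sum_le_sum fun n hn => mul_le_mul_of_nonneg_left (key n hn) (hp0 n hn)
    _ = (1 / η) * (B u xt - ∑ n ∈ N, p n * B u (xloc n)) + η * μ ^ 2 / 2 := hsum2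
    _ ≤ (1 / η) * (B u xt - B u xt1) + η * μ ^ 2 / 2 := by
        have h1η : (0:ℝ) ≤ 1 / η := by positivity
        have hd1 : (1 / η) * (B u xt - ∑ n ∈ N, p n * B u (xloc n))
            = (1 / η) * B u xt - (1 / η) * ∑ n ∈ N, p n * B u (xloc n) := by ring
        have hd2 : (1 / η) * (B u xt - B u xt1)
            = (1 / η) * B u xt - (1 / η) * B u xt1 := by ring
        linarith [mul_le_mul_of_nonneg_left hjen h1η]
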